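/- Let σ : [0,ρ₀] → M̃ be a unit speed geodesic in the universal cover M̃ of a compact Riemannian manifold (pullback metric), and let X_t be a vector field along σ solving the inhomogeneous Jacobi equation D_t²X + R(X, σ')σ' + S = 0 with X₀ = 0 and |S(t)| ≤ B for all t. If X also satisfies X_{ρ₀} = 0, then there exist constants C, C' > 0 depending only on M such that |X_t| ≤ C(1 + B) e^{C' ρ₀} for all t ∈ [0,ρ₀]. -/

import Mathlib

open scoped RealInnerProductSpace

/-- Gronwall/boundary-value bound of Lemma 3.4: a solution of the inhomogeneous Jacobi
equation `D_t²X + R(X,σ')σ' + S = 0` along a unit speed geodesic `σ : [0,ρ₀] → M̃`, with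
`X₀ = X_{ρ₀} = 0` and `|S| ≤ B`, satisfies `|X_t| ≤ C(1+B)e^{C'ρ₀}` with `C, C'` depending
only on `M` (i.e. on the uniform curvature bound `K`).  Setting: parallel orthonormal
trivialization along `σ` (covariant derivative = `deriv`); the curvature operator
`Rc t = R(·,σ')σ'` is uniformly bounded (`M` compact) and nonpositive
(`M̃` nonpositively curved, hence without conjugate points). -/
theorem stmt12 {E : Type*} [NormedAddCommGroup E] [InnerProductSpace ℝ E]
    (K : ℝ) (hK : 0 ≤ K) :
    ∃ C C' : ℝ, 0 < C ∧ 0 < C' ∧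
      ∀ (ρ₀ : ℝ) (X S : ℝ → E) (Rc : ℝ → E → E) (B : ℝ),
        0 < ρ₀ → 0 ≤ B →
        ContDiff ℝ 2 X → Continuous S →
        (∀ t, deriv (deriv X) t + Rc t (X t) + S t = 0) →
        (∀ t, IsLinearMap ℝ (Rc t)) →
        (∀ (t : ℝ) (v : E), ‖Rc t v‖ ≤ K * ‖v‖) →
        (∀ (t : ℝ) (v : E), ⟪Rc t v, v⟫ ≤ 0) →
        (∀ t ∈ Set.Icc 0 ρ₀, ‖S t‖ ≤ B) →
        X 0 = 0 → X ρ₀ = 0 →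
        ∀ t ∈ Set.Icc 0 ρ₀, ‖X t‖ ≤ C * (1 + B) * Real.exp (C' * ρ₀) := by
  refine ⟨1, 1, one_pos, one_pos, ?_⟩
  intro ρ₀ X S Rc B hρ₀ hB hX hS heq _hlin _hKbd hneg hSbd hX0 hXρ
  have hXd : Differentiable ℝ X := hX.differentiable (by norm_num)
  have hX2 : ContDiff ℝ ((1 : ℕ) + 1) X := by exact_mod_cast hX
  have hX'c : ContDiff ℝ 1 (deriv X) := (contDiff_succ_iff_deriv.mp hX2).2.2
  have hX'd : Differentiable ℝ (deriv X) := hX'c.differentiable one_ne_zero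
  -- maximum of ‖X‖ on the interval
  obtain ⟨t₀, ht₀, hmax⟩ := isCompact_Icc.exists_isMaxOn (Set.nonempty_Icc.mpr hρ₀.le)
    (hXd.continuous.norm.continuousOn (s := Set.Icc 0 ρ₀))
  set m : ℝ := ‖X t₀‖ with hm
  have hm0 : 0 ≤ m := norm_nonneg _
  have hle : ∀ t ∈ Set.Icc 0 ρ₀, ‖X t‖ ≤ m := fun t ht => hmax ht
  -- the auxiliary function and its derivatives
  set h : ℝ → ℝ := fun t => ⟪X t, X t⟫ + B * m * t ^ 2 - B * m * ρ₀ * t with hh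
  set h' : ℝ → ℝ := fun t => 2 * ⟪deriv X t, X t⟫ + 2 * B * m * t - B * m * ρ₀ with hh'
  set h'' : ℝ → ℝ := fun t =>
    2 * ⟪deriv (deriv X) t, X t⟫ + 2 * ⟪deriv X t, deriv X t⟫ + 2 * B * m with hh''
  have hd1 : ∀ t : ℝ, HasDerivAt h (h' t) t := by
    intro t
    have h1 : HasDerivAt (fun t => ⟪X t, X t⟫)
        (⟪X t, deriv X t⟫ + ⟪deriv X t, X t⟫) t :=
      HasDerivAt.inner ℝ (hXd t).hasDerivAt (hXd t).hasDerivAt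
    have h2 : HasDerivAt (fun t : ℝ => B * m * t ^ 2) (B * m * (2 * t)) t := by
      simpa using ((hasDerivAt_pow 2 t).const_mul (B * m))
    have h3 : HasDerivAt (fun t : ℝ => B * m * ρ₀ * t) (B * m * ρ₀) t := by
      simpa using (hasDerivAt_id t).const_mul (B * m * ρ₀)
    have := (h1.add h2).sub h3
    refine this.congr_deriv ?_
    simp only [hh', real_inner_comm (X t) (deriv X t)]
    ring
  have hd2 : ∀ t : ℝ, HasDerivAt h' (h'' t) t := by
    intro t
    have h1 : HasDerivAt (fun t => ⟪deriv X t, X t⟫)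
        (⟪deriv X t, deriv X t⟫ + ⟪deriv (deriv X) t, X t⟫) t :=
      HasDerivAt.inner ℝ (hX'd t).hasDerivAt (hXd t).hasDerivAt
    have h2 : HasDerivAt (fun t : ℝ => 2 * B * m * t) (2 * B * m) t := by
      simpa using (hasDerivAt_id t).const_mul (2 * B * m)
    have := ((h1.const_mul 2).add h2).sub (hasDerivAt_const t (B * m * ρ₀))
    refine this.congr_deriv ?_
    simp only [hh'']
    ring
  -- convexity of h on [0,ρ₀]
  have hconv : ConvexOn ℝ (Set.Icc 0 ρ₀) h := by
    apply convexOn_of_hasDerivWithinAt2_nonneg (f' := h') (f'' := h'') (convex_Icc 0 ρ₀)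
    · exact (Continuous.continuousOn (by
        exact ((hXd.continuous.inner hXd.continuous).add (by continuity)).sub (by continuity)))
    · exact fun x _ => (hd1 x).hasDerivWithinAt
    · exact fun x _ => (hd2 x).hasDerivWithinAt
    · intro x hx
      have hx' : x ∈ Set.Icc 0 ρ₀ := interior_subset hx
      have hXx : ‖X x‖ ≤ m := hle x hx'
      have hSx : ‖S x‖ ≤ B := hSbd x hx'
      have hXdd : deriv (deriv X) x = -(Rc x (X x)) - S x := by
        have := heq x; linear_combination (norm := abel) this
      have hR : ⟪Rc x (X x), X x⟫ ≤ 0 := hneg x (X x)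
      have hSX : ⟪S x, X x⟫ ≤ B * m := by
        calc ⟪S x, X x⟫ ≤ ‖S x‖ * ‖X x‖ := real_inner_le_norm _ _
        _ ≤ B * m := by
            apply mul_le_mul hSx hXx (norm_nonneg _) hB
      have hXX : (0:ℝ) ≤ ⟪deriv X x, deriv X x⟫ := real_inner_self_nonneg
      simp only [hh'', hXdd, inner_sub_left, inner_neg_left]
      nlinarith
  -- h vanishes at the endpoints
  have hzero0 : h 0 = 0 := by simp [hh, hX0]
  have hzeroρ : h ρ₀ = 0 := by simp [hh, hXρ]; ring
  -- hence h ≤ 0 on [0,ρ₀]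
  have hle0 : ∀ t ∈ Set.Icc 0 ρ₀, h t ≤ 0 := by
    intro t ht
    obtain ⟨ht1, ht2⟩ := ht
    have ha : (0:ℝ) ≤ 1 - t / ρ₀ := by
      have : t / ρ₀ ≤ 1 := (div_le_one hρ₀).mpr ht2
      linarith
    have hb : (0:ℝ) ≤ t / ρ₀ := div_nonneg ht1 hρ₀.le
    have hab : (1 - t / ρ₀) + t / ρ₀ = 1 := by ring
    have := hconv.2 (Set.left_mem_Icc.mpr hρ₀.le) (Set.right_mem_Icc.mpr hρ₀.le) ha hb hab
    have ht' : (1 - t / ρ₀) • (0:ℝ) + (t / ρ₀) • ρ₀ = t := by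
      rw [smul_eq_mul, smul_eq_mul]; field_simp; ring
    rw [ht'] at this
    simpa [hzero0, hzeroρ] using this
  -- bound m
  have hmbound : m ≤ B * ρ₀ ^ 2 / 4 := by
    have h1 : h t₀ ≤ 0 := hle0 t₀ ht₀
    have h2 : ⟪X t₀, X t₀⟫ = m ^ 2 := by
      rw [real_inner_self_eq_norm_sq]
    obtain ⟨ht1, ht2⟩ := ht₀
    rcases eq_or_lt_of_le hm0 with hm' | hm'
    · nlinarith
    · have key : m ^ 2 ≤ B * m * ρ₀ * t₀ - B * m * t₀ ^ 2 := by
        simp only [hh, h2] at h1; linarith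
      nlinarith [mul_nonneg (mul_nonneg hB hm0) (sq_nonneg (ρ₀ - 2 * t₀))]
  -- finish: ρ₀² ≤ 4 e^{ρ₀}
  intro t ht
  have hexp : ρ₀ ^ 2 ≤ 4 * Real.exp ρ₀ := by
    have h1 : ρ₀ / 2 + 1 ≤ Real.exp (ρ₀ / 2) := Real.add_one_le_exp _
    have h2 : Real.exp (ρ₀ / 2) * Real.exp (ρ₀ / 2) = Real.exp ρ₀ := by
      rw [← Real.exp_add]; ring_nf
    nlinarith [Real.exp_pos (ρ₀ / 2), hρ₀.le]
  have hEpos : 0 < Real.exp ρ₀ := Real.exp_pos _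
  calc ‖X t‖ ≤ m := hle t ht
  _ ≤ B * ρ₀ ^ 2 / 4 := hmbound
  _ ≤ B * Real.exp ρ₀ := by nlinarith
  _ ≤ 1 * (1 + B) * Real.exp (1 * ρ₀) := by rw [one_mul, one_mul]; nlinarith
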